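/- For every k ≥ 1 the equation Q_k(x) = P_k(x) has exactly one root α_k in (0,1), where P_k(x) = k ∫_0^1 y^{k-1}(1−xy)^{-k} dy and Q_k(x) = k ∫_0^1 y^{k-1} |log(1−xy)| (1−xy)^{-k} dy: the ratio Q_k(x)/P_k(x) is continuous and strictly increasing in x on [0,1), equals 0 at x = 0, and tends to ∞ as x → 1. -/

import Mathlib

open Filter Set

/-- Euler-integral form `P_k(x) = k ∫₀¹ y^{k-1}(1-xy)^{-k} dy`. -/
noncomputable def Pint (k : ℕ) (x : ℝ) : ℝ :=
  k * ∫ y in (0:ℝ)..1, y ^ (k - 1) / (1 - x * y) ^ k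

/-- Euler-integral form `Q_k(x) = k ∫₀¹ y^{k-1} |log(1-xy)| (1-xy)^{-k} dy`. -/
noncomputable def Qint (k : ℕ) (x : ℝ) : ℝ :=
  k * ∫ y in (0:ℝ)..1, y ^ (k - 1) * |Real.log (1 - x * y)| / (1 - x * y) ^ k

namespace URA

noncomputable def hf (k : ℕ) (t : ℝ) : ℝ := t ^ (k-1) / (1-t) ^ k
noncomputable def gf (t : ℝ) : ℝ := -Real.log (1-t)
noncomputable def pf (k : ℕ) (t : ℝ) : ℝ := t ^ (k-1) * |Real.log (1-t)| / (1-t) ^ k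
noncomputable def F (k : ℕ) (x : ℝ) : ℝ := ∫ t in (0:ℝ)..x, hf k t
noncomputable def G (k : ℕ) (x : ℝ) : ℝ := ∫ t in (0:ℝ)..x, hf k t * gf t

lemma hf_contAt (k : ℕ) {t : ℝ} (ht : t ≠ 1) : ContinuousAt (hf k) t := by
  apply ContinuousAt.div (by fun_prop) (by fun_prop)
  exact pow_ne_zero _ (by intro h; apply ht; linarith [sub_eq_zero.mp h])

lemma gf_contAt {t : ℝ} (ht : t ≠ 1) : ContinuousAt gf t := by
  apply ContinuousAt.neg
  exact (Real.continuousAt_log (by intro h; apply ht; linarith [sub_eq_zero.mp h])).comp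
    (by fun_prop)

lemma hg_contAt (k : ℕ) {t : ℝ} (ht : t ≠ 1) :
    ContinuousAt (fun t => hf k t * gf t) t :=
  (hf_contAt k ht).mul (gf_contAt ht)

lemma contOn (k : ℕ) {s : Set ℝ} (hs : s ⊆ {t | t ≠ 1}) : ContinuousOn (hf k) s :=
  fun t ht => (hf_contAt k (hs ht)).continuousWithinAt

lemma contOn' (k : ℕ) {s : Set ℝ} (hs : s ⊆ {t | t ≠ 1}) :
    ContinuousOn (fun t => hf k t * gf t) s :=
  fun t ht => (hg_contAt k (hs ht)).continuousWithinAt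

lemma sub_one (a b : ℝ) (ha : a < 1) (hb : b < 1) : uIcc a b ⊆ {t | t ≠ 1} := by
  intro t ht
  rcases mem_uIcc.mp ht with h | h <;>
    exact fun h1 => by simp_all; rcases h with ⟨_,h2⟩ <;> linarith

lemma intInt (k : ℕ) {a b : ℝ} (ha : a < 1) (hb : b < 1) :
    IntervalIntegrable (hf k) MeasureTheory.volume a b :=
  (contOn k (sub_one a b ha hb)).intervalIntegrable

lemma intInt' (k : ℕ) {a b : ℝ} (ha : a < 1) (hb : b < 1) :
    IntervalIntegrable (fun t => hf k t * gf t) MeasureTheory.volume a b :=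
  (contOn' k (sub_one a b ha hb)).intervalIntegrable

lemma hf_pos (k : ℕ) {t : ℝ} (h0 : 0 < t) (h1 : t < 1) : 0 < hf k t := by
  apply div_pos (pow_pos h0 _) (pow_pos (by linarith) _)

lemma hf_nonneg (k : ℕ) {t : ℝ} (h0 : 0 ≤ t) (h1 : t < 1) : 0 ≤ hf k t := by
  apply div_nonneg (pow_nonneg h0 _) (pow_nonneg (by linarith) _)

lemma gf_pos {t : ℝ} (h0 : 0 < t) (h1 : t < 1) : 0 < gf t := by
  have : Real.log (1-t) < 0 := Real.log_neg (by linarith) (by linarith)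
  simp [gf]; linarith

lemma gf_mono {s t : ℝ} (hs : 0 ≤ s) (hst : s < t) (ht : t < 1) : gf s < gf t := by
  have : Real.log (1-t) < Real.log (1-s) := Real.log_lt_log (by linarith) (by linarith)
  simp [gf]; linarith

lemma gf_mono_le {s t : ℝ} (hs : 0 ≤ s) (hst : s ≤ t) (ht : t < 1) : gf s ≤ gf t := by
  rcases eq_or_lt_of_le hst with h | h
  · rw [h]
  · exact (gf_mono hs h ht).le

lemma gf_nonneg {t : ℝ} (h0 : 0 ≤ t) (h1 : t < 1) : 0 ≤ gf t := by
  rcases eq_or_lt_of_le h0 with h | h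
  · simp [gf, ← h]
  · exact (gf_pos h h1).le

lemma F_pos (k : ℕ) {x : ℝ} (h0 : 0 < x) (h1 : x < 1) : 0 < F k x :=
  intervalIntegral.intervalIntegral_pos_of_pos_on (intInt k one_pos h1)
    (fun t ht => hf_pos k ht.1 (ht.2.trans h1)) h0

lemma G_pos (k : ℕ) {x : ℝ} (h0 : 0 < x) (h1 : x < 1) : 0 < G k x :=
  intervalIntegral.intervalIntegral_pos_of_pos_on (intInt' k one_pos h1)
    (fun t ht => mul_pos (hf_pos k ht.1 (ht.2.trans h1)) (gf_pos ht.1 (ht.2.trans h1))) h0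

lemma G_nonneg (k : ℕ) {x : ℝ} (h0 : 0 ≤ x) (h1 : x < 1) : 0 ≤ G k x := by
  rcases eq_or_lt_of_le h0 with h | h
  · simp [G, ← h]
  · exact (G_pos k h h1).le

lemma F_hasDeriv (k : ℕ) {x : ℝ} (h1 : x < 1) : HasDerivAt (F k) (hf k x) x :=
  intervalIntegral.integral_hasDerivAt_right (intInt k one_pos h1)
    (ContinuousAt.stronglyMeasurableAtFilter isOpen_Iio
      (fun t ht => hf_contAt k (ne_of_lt ht)) x h1) (hf_contAt k h1.ne)

lemma G_hasDeriv (k : ℕ) {x : ℝ} (h1 : x < 1) :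
    HasDerivAt (G k) (hf k x * gf x) x :=
  intervalIntegral.integral_hasDerivAt_right (intInt' k one_pos h1)
    (ContinuousAt.stronglyMeasurableAtFilter isOpen_Iio
      (fun t ht => hg_contAt k (ne_of_lt ht)) x h1) (hg_contAt k h1.ne)

lemma Pint_eq (k : ℕ) (hk : 1 ≤ k) {x : ℝ} (h0 : 0 < x) (h1 : x < 1) :
    Pint k x = (k / x^k) * F k x := by
  have hxk : (x:ℝ)^k = x^(k-1) * x := by
    rw [← pow_succ]; congr 1; omega
  have e1 : (∫ y in (0:ℝ)..1, hf k (x*y)) = x⁻¹ * F k x := by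
    rw [intervalIntegral.integral_comp_mul_left _ h0.ne']
    simp [F, smul_eq_mul]
  have e2 : (∫ y in (0:ℝ)..1, hf k (x*y))
      = x^(k-1) * ∫ y in (0:ℝ)..1, y ^ (k - 1) / (1 - x * y) ^ k := by
    rw [← intervalIntegral.integral_const_mul]
    apply intervalIntegral.integral_congr
    intro y _
    simp [hf, mul_pow, mul_div_assoc]
  have hx1 : (x:ℝ)^(k-1) ≠ 0 := pow_ne_zero _ h0.ne'
  rw [Pint]
  rw [e1] at e2
  field_simp [hxk] at e2 ⊢
  rw [e2, hxk]; ring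

lemma Qint_eq (k : ℕ) (hk : 1 ≤ k) {x : ℝ} (h0 : 0 < x) (h1 : x < 1) :
    Qint k x = (k / x^k) * G k x := by
  have hxk : (x:ℝ)^k = x^(k-1) * x := by
    rw [← pow_succ]; congr 1; omega
  have e0 : (∫ t in (0:ℝ)..x, pf k t) = G k x := by
    apply intervalIntegral.integral_congr
    intro t ht
    rw [uIcc_of_le h0.le] at ht
    have hl : Real.log (1-t) ≤ 0 := Real.log_nonpos (by linarith [ht.1, ht.2]) (by linarith [ht.1])
    simp only [pf, hf, gf, abs_of_nonpos hl]; ring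
  have e1 : (∫ y in (0:ℝ)..1, pf k (x*y)) = x⁻¹ * G k x := by
    rw [intervalIntegral.integral_comp_mul_left _ h0.ne']
    simp [smul_eq_mul, e0]
  have e2 : (∫ y in (0:ℝ)..1, pf k (x*y))
      = x^(k-1) * ∫ y in (0:ℝ)..1, y ^ (k - 1) * |Real.log (1 - x * y)| / (1 - x * y) ^ k := by
    rw [← intervalIntegral.integral_const_mul]
    apply intervalIntegral.integral_congr
    intro y _
    simp only [pf, mul_pow]; ring
  have hx1 : (x:ℝ)^(k-1) ≠ 0 := pow_ne_zero _ h0.ne'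
  rw [Qint]
  rw [e1] at e2
  field_simp [hxk] at e2 ⊢
  rw [e2, hxk]; ring

lemma Pint_pos (k : ℕ) (hk : 1 ≤ k) {x : ℝ} (h0 : 0 < x) (h1 : x < 1) :
    0 < Pint k x := by
  rw [Pint_eq k hk h0 h1]
  have hkpos : (0:ℝ) < k := by exact_mod_cast hk
  exact mul_pos (div_pos hkpos (pow_pos h0 _)) (F_pos k h0 h1)

lemma ratio_eq (k : ℕ) (hk : 1 ≤ k) {x : ℝ} (h0 : 0 < x) (h1 : x < 1) :
    Qint k x / Pint k x = G k x / F k x := by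
  rw [Pint_eq k hk h0 h1, Qint_eq k hk h0 h1]
  have hkpos : (0:ℝ) < k := by exact_mod_cast hk
  rw [mul_div_mul_left _ _ (ne_of_gt (div_pos hkpos (pow_pos h0 _)))]

lemma key_pos (k : ℕ) {x : ℝ} (h0 : 0 < x) (h1 : x < 1) :
    0 < gf x * F k x - G k x := by
  have hint : IntervalIntegrable (fun t => hf k t * (gf x - gf t))
      MeasureTheory.volume 0 x := by
    apply ContinuousOn.intervalIntegrable
    intro t ht
    have ht1 : t ≠ 1 := sub_one 0 x one_pos h1 ht
    exact ((hf_contAt k ht1).mul (continuousAt_const.sub (gf_contAt ht1))).continuousWithinAt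
  have e : gf x * F k x - G k x = ∫ t in (0:ℝ)..x, hf k t * (gf x - gf t) := by
    rw [F, G, ← intervalIntegral.integral_const_mul,
      ← intervalIntegral.integral_sub ((intInt k one_pos h1).const_mul _) (intInt' k one_pos h1)]
    apply intervalIntegral.integral_congr
    intro t _; ring
  rw [e]
  apply intervalIntegral.intervalIntegral_pos_of_pos_on hint _ h0
  intro t ht
  exact mul_pos (hf_pos k ht.1 (ht.2.trans h1)) (sub_pos.mpr (gf_mono ht.1.le ht.2 h1))

lemma ratio_hasDeriv (k : ℕ) {x : ℝ} (h0 : 0 < x) (h1 : x < 1) :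
    HasDerivAt (fun x => G k x / F k x)
      ((hf k x * gf x * F k x - G k x * hf k x) / (F k x)^2) x :=
  (G_hasDeriv k h1).div (F_hasDeriv k h1) (F_pos k h0 h1).ne'

lemma ratio_mono (k : ℕ) : StrictMonoOn (fun x => G k x / F k x) (Ioo (0:ℝ) 1) := by
  apply strictMonoOn_of_deriv_pos (convex_Ioo 0 1)
  · intro x hx
    exact (ratio_hasDeriv k hx.1 hx.2).continuousAt.continuousWithinAt
  · intro x hx
    rw [interior_Ioo] at hx
    rw [(ratio_hasDeriv k hx.1 hx.2).deriv]
    have key := key_pos k hx.1 hx.2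
    have hfp := hf_pos k hx.1 hx.2
    have hF := F_pos k hx.1 hx.2
    apply div_pos _ (pow_pos hF 2)
    nlinarith

lemma Qint_zero (k : ℕ) : Qint k 0 = 0 := by
  simp [Qint]

/-- `G x ≤ gf x * F x`, so the ratio is at most `gf x`. -/
lemma ratio_le_gf (k : ℕ) {x : ℝ} (h0 : 0 < x) (h1 : x < 1) :
    G k x / F k x ≤ gf x := by
  rw [div_le_iff₀ (F_pos k h0 h1)]
  nlinarith [key_pos k h0 h1]

lemma gf_tendsto : Tendsto gf (nhdsWithin 1 (Iio (1:ℝ))) atTop := by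
  have h1 : Tendsto (fun x : ℝ => 1 - x) (nhdsWithin 1 (Iio (1:ℝ))) (nhdsWithin 0 (Ioi (0:ℝ))) := by
    apply tendsto_nhdsWithin_of_tendsto_nhds_of_eventually_within
    · have hcont : Continuous fun x : ℝ => 1 - x := by fun_prop
      have : Tendsto (fun x : ℝ => 1 - x) (nhds 1) (nhds 0) := by
        simpa using hcont.tendsto 1
      exact this.mono_left nhdsWithin_le_nhds
    · filter_upwards [self_mem_nhdsWithin] with x hx
      exact mem_Ioi.mpr (sub_pos.mpr hx)
  have h2 := Real.tendsto_log_nhdsGT_zero.comp h1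
  exact tendsto_neg_atBot_atTop.comp h2

lemma F_split (k : ℕ) {c x : ℝ} (hc : c < 1) (hx : x < 1) :
    F k x = F k c + ∫ t in c..x, hf k t := by
  rw [F, F, ← intervalIntegral.integral_add_adjacent_intervals
    (intInt k one_pos hc) (intInt k hc hx)]

lemma G_split (k : ℕ) {c x : ℝ} (hc : c < 1) (hx : x < 1) :
    G k x = G k c + ∫ t in c..x, hf k t * gf t := by
  rw [G, G, ← intervalIntegral.integral_add_adjacent_intervals
    (intInt' k one_pos hc) (intInt' k hc hx)]

lemma int_inv_integrable {c x : ℝ} (hc : c < 1) (hx : x < 1) :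
    IntervalIntegrable (fun t : ℝ => (1-t)⁻¹) MeasureTheory.volume c x := by
  apply ContinuousOn.intervalIntegrable
  intro t ht
  have ht1 : t ≠ 1 := sub_one c x hc hx ht
  have : (1:ℝ) - t ≠ 0 := by intro h; apply ht1; linarith [sub_eq_zero.mp h]
  exact ((continuousAt_const.sub continuousAt_id).inv₀ this).continuousWithinAt

lemma int_inv {c x : ℝ} (hcx : c ≤ x) (hx : x < 1) :
    (∫ t in c..x, (1-t)⁻¹) = gf x - gf c := by
  apply intervalIntegral.integral_eq_sub_of_hasDerivAt
  · intro t ht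
    rw [uIcc_of_le hcx] at ht
    have ht1 : t < 1 := lt_of_le_of_lt ht.2 hx
    have hne : (0:ℝ) < 1 - t := by linarith
    have hlog := (Real.hasDerivAt_log hne.ne').comp t
      ((hasDerivAt_id t).const_sub 1)
    have hgf : gf = fun t => -Real.log (1-t) := rfl
    rw [hgf]
    convert hlog.neg using 1
    · rfl
    · ring
  · exact int_inv_integrable (lt_of_le_of_lt hcx hx) hx

lemma F_lb (k : ℕ) (hk : 1 ≤ k) {c x : ℝ} (hc : 0 < c) (hcx : c ≤ x) (hx : x < 1) :
    F k c + c^(k-1) * (gf x - gf c) ≤ F k x := by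
  have hc1 : c < 1 := lt_of_le_of_lt hcx hx
  rw [F_split k hc1 hx]
  have hmono : (∫ t in c..x, c^(k-1) * (1-t)⁻¹) ≤ ∫ t in c..x, hf k t := by
    apply intervalIntegral.integral_mono_on hcx
      ((int_inv_integrable hc1 hx).const_mul _) (intInt k hc1 hx)
    intro t ht
    have ht1 : t < 1 := lt_of_le_of_lt ht.2 hx
    have h1t : (0:ℝ) < 1 - t := by linarith
    have hp1 : c^(k-1) ≤ t^(k-1) := pow_le_pow_left₀ hc.le ht.1 _
    have hp2 : (1-t)^k ≤ (1-t)^1 := pow_le_pow_of_le_one h1t.le (by linarith [ht.1, hc.le]) hk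
    rw [pow_one] at hp2
    have hd := div_le_div₀ (pow_nonneg (hc.le.trans ht.1) (k-1)) hp1 (pow_pos h1t k) hp2
    simp only [hf]
    rw [← div_eq_mul_inv]
    exact hd
  rw [intervalIntegral.integral_const_mul, int_inv hcx hx] at hmono
  linarith

lemma F_tendsto (k : ℕ) (hk : 1 ≤ k) : Tendsto (F k) (nhdsWithin 1 (Iio (1:ℝ))) atTop := by
  have hc : (0:ℝ) < 2⁻¹ := by norm_num
  have hev : (fun x => F k 2⁻¹ + (2:ℝ)⁻¹^(k-1) * (gf x - gf 2⁻¹))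
      ≤ᶠ[nhdsWithin 1 (Iio (1:ℝ))] F k := by
    filter_upwards [Ico_mem_nhdsLT_of_mem (show (1:ℝ) ∈ Ioc 2⁻¹ 1 by norm_num)] with x hx
    exact F_lb k hk hc hx.1 hx.2
  have htt : Tendsto (fun x => F k 2⁻¹ + (2:ℝ)⁻¹^(k-1) * (gf x - gf 2⁻¹))
      (nhdsWithin 1 (Iio (1:ℝ))) atTop := by
    apply tendsto_atTop_add_const_left
    apply Tendsto.const_mul_atTop (by positivity)
    exact tendsto_atTop_add_const_right _ _ gf_tendsto
  exact tendsto_atTop_mono' _ hev htt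

lemma ratio_tendsto (k : ℕ) (hk : 1 ≤ k) :
    Tendsto (fun x => Qint k x / Pint k x) (nhdsWithin 1 (Iio (1:ℝ))) atTop := by
  rw [tendsto_atTop]
  intro M
  set M' : ℝ := max M 0 with hM'
  have hM'0 : 0 ≤ M' := le_max_right _ _
  have hMM' : M ≤ M' := le_max_left _ _
  set c : ℝ := 1 - Real.exp (-(M'+1)) with hcdef
  have hc0 : 0 < c := by
    have : Real.exp (-(M'+1)) < 1 := Real.exp_lt_one_iff.mpr (by linarith)
    simp only [hcdef]; linarith
  have hc1 : c < 1 := by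
    have := Real.exp_pos (-(M'+1))
    simp only [hcdef]; linarith
  have hgfc : gf c = M' + 1 := by
    simp [gf, hcdef, Real.log_exp]
  filter_upwards [Ioo_mem_nhdsLT_of_mem (show (1:ℝ) ∈ Ioc c 1 from ⟨hc1, le_refl _⟩),
    tendsto_atTop.1 (F_tendsto k hk) ((M'+1) * F k c)] with x hx hFx
  have h0x : 0 < x := hc0.trans hx.1
  have hx1 : x < 1 := hx.2
  rw [ratio_eq k hk h0x hx1]
  have hFpos := F_pos k h0x hx1
  rw [le_div_iff₀ hFpos]
  have hFsplit := F_split k hc1 hx1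
  have hGsplit := G_split k hc1 hx1
  have hGc := G_nonneg k hc0.le hc1
  have hFc := F_pos k hc0 hc1
  have hmono : gf c * (∫ t in c..x, hf k t) ≤ ∫ t in c..x, hf k t * gf t := by
    rw [← intervalIntegral.integral_const_mul]
    apply intervalIntegral.integral_mono_on hx.1.le
      ((intInt k hc1 hx1).const_mul _) (intInt' k hc1 hx1)
    intro t ht
    have ht1 : t < 1 := lt_of_le_of_lt ht.2 hx1
    have := mul_le_mul_of_nonneg_left (gf_mono_le hc0.le ht.1 ht1)
      (hf_nonneg k (hc0.le.trans ht.1) ht1)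
    linarith [this]
  rw [hgfc] at hmono
  -- Goal: M * F k x ≤ G k x
  nlinarith [hFx, hFsplit, hGsplit, hGc, hFc, hmono, hFpos, hMM', hM'0]

end URA

open URA in
/-- for every `k ≥ 1`, the ratio `Q_k/P_k` is strictly increasing on
`[0,1)`, vanishes at `0`, and tends to `∞` as `x → 1⁻`; consequently the equation
`Q_k(x) = P_k(x)` has exactly one root `α_k ∈ (0,1)`. -/
theorem unique_root_alpha (k : ℕ) (hk : 1 ≤ k) :
    StrictMonoOn (fun x => Qint k x / Pint k x) (Set.Ico (0 : ℝ) 1) ∧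
    Qint k 0 / Pint k 0 = 0 ∧
    Tendsto (fun x => Qint k x / Pint k x) (nhdsWithin 1 (Set.Iio (1 : ℝ))) atTop ∧
    (∃! x : ℝ, x ∈ Set.Ioo (0 : ℝ) 1 ∧ Qint k x = Pint k x) := by
  have hmono : StrictMonoOn (fun x => Qint k x / Pint k x) (Set.Ico (0 : ℝ) 1) := by
    intro a ha b hb hab
    rcases eq_or_lt_of_le ha.1 with h | h
    · simp only [← h, Qint_zero, zero_div]
      have hb0 : 0 < b := by rw [← h] at hab; exact hab
      rw [ratio_eq k hk hb0 hb.2]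
      exact div_pos (G_pos k hb0 hb.2) (F_pos k hb0 hb.2)
    · simp only
      rw [ratio_eq k hk h ha.2, ratio_eq k hk (h.trans hab) hb.2]
      exact ratio_mono k ⟨h, ha.2⟩ ⟨h.trans hab, hb.2⟩ hab
  refine ⟨hmono, by simp [Qint_zero], ratio_tendsto k hk, ?_⟩
  -- existence
  have hbig := tendsto_atTop.1 (ratio_tendsto k hk) 2
  have hmem : Set.Ioo (0:ℝ) 1 ∈ nhdsWithin 1 (Set.Iio (1:ℝ)) :=
    Ioo_mem_nhdsLT_of_mem (show (1:ℝ) ∈ Set.Ioc 0 1 by norm_num)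
  obtain ⟨b, hb2, hbmem⟩ := (hbig.and (eventually_of_mem hmem (fun x hx => hx))).exists
  have hb0 : 0 < b := hbmem.1
  have hb1 : b < 1 := hbmem.2
  have hexppos : (0:ℝ) < 1 - Real.exp (-1) := by
    have : Real.exp (-1) < 1 := Real.exp_lt_one_iff.mpr (by norm_num)
    linarith
  set a : ℝ := min (1 - Real.exp (-1)) b / 2 with hadef
  have hminpos : 0 < min (1 - Real.exp (-1)) b := lt_min hexppos hb0
  have ha0 : 0 < a := by positivity
  have hab : a < b := by
    have h1 : a < min (1 - Real.exp (-1)) b := by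
      rw [hadef]; linarith
    exact h1.trans_le (min_le_right _ _)
  have ha1 : a < 1 := hab.trans hb1
  have hae : a < 1 - Real.exp (-1) := by
    have h1 : a < min (1 - Real.exp (-1)) b := by
      rw [hadef]; linarith
    exact h1.trans_le (min_le_left _ _)
  have hexp1 : 1 - Real.exp (-1) < 1 := by
    have := Real.exp_pos (-1); linarith
  have hRa : Qint k a / Pint k a < 1 := by
    rw [ratio_eq k hk ha0 ha1]
    have h1 := ratio_le_gf k ha0 ha1
    have h2 : gf a < gf (1 - Real.exp (-1)) := gf_mono ha0.le hae hexp1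
    have h3 : gf (1 - Real.exp (-1)) = 1 := by
      simp [gf, Real.log_exp]
    linarith
  have hcont : ContinuousOn (fun x => Qint k x / Pint k x) (Set.Icc a b) := by
    apply ContinuousOn.congr (f := fun x => G k x / F k x)
    · intro x hx
      have hx0 : 0 < x := ha0.trans_le hx.1
      have hx1 : x < 1 := lt_of_le_of_lt hx.2 hb1
      exact (ratio_hasDeriv k hx0 hx1).continuousAt.continuousWithinAt
    · intro x hx
      exact ratio_eq k hk (ha0.trans_le hx.1) (lt_of_le_of_lt hx.2 hb1)
  have hivt := intermediate_value_Ioo hab.le hcont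
  have h1mem : (1:ℝ) ∈ Set.Ioo (Qint k a / Pint k a) (Qint k b / Pint k b) :=
    ⟨hRa, by linarith⟩
  obtain ⟨x₀, hx₀mem, hx₀⟩ := hivt h1mem
  have hx₀Ioo : x₀ ∈ Set.Ioo (0:ℝ) 1 := ⟨ha0.trans hx₀mem.1, hx₀mem.2.trans hb1⟩
  have hroot : Qint k x₀ = Pint k x₀ := by
    have hP := (Pint_pos k hk hx₀Ioo.1 hx₀Ioo.2).ne'
    field_simp at hx₀
    exact hx₀
  refine ⟨x₀, ⟨hx₀Ioo, hroot⟩, ?_⟩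
  intro y ⟨hy, hQP⟩
  have hy1 : Qint k y / Pint k y = 1 := by
    rw [hQP, div_self (Pint_pos k hk hy.1 hy.2).ne']
  have hx₀1 : Qint k x₀ / Pint k x₀ = 1 := by
    rw [hroot, div_self (Pint_pos k hk hx₀Ioo.1 hx₀Ioo.2).ne']
  exact hmono.injOn ⟨hy.1.le, hy.2⟩ ⟨hx₀Ioo.1.le, hx₀Ioo.2⟩ (by rw [hy1, hx₀1])
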